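/- Let σ(s) = (1+s²)R(s) where R, q, p, u, v, w satisfy the coupled Cauchy single-interval system with decay at infinity. Then σ satisfies the second-order second-degree ODE (1+s²)²(σ'')² + 4(1+s²)(σ')³ - 8sσ(σ')² + 4σ²(σ' - a²) + 8a²sσσ' + 4[N(N+2a) - a²s²](σ')² = 0. -/

import Mathlib

open Filter

lemma const_of_deriv {f : ℝ → ℝ} {s₀ : ℝ}
    (hf : ∀ s ∈ Set.Ioi s₀, HasDerivAt f 0 s) :
    ∀ x ∈ Set.Ioi s₀, ∀ y ∈ Set.Ioi s₀, f x = f y := by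
  intro x hx y hy
  refine (convex_Ioi s₀).is_const_of_fderivWithin_eq_zero
    (fun z hz => ((hf z hz).differentiableAt).differentiableWithinAt) ?_ hx hy
  intro z hz
  rw [fderivWithin_of_isOpen isOpen_Ioi hz, (hf z hz).hasFDerivAt.fderiv]
  ext t; simp

lemma eq_limit {f : ℝ → ℝ} {s₀ c : ℝ}
    (hf : ∀ s ∈ Set.Ioi s₀, HasDerivAt f 0 s)
    (h0 : Tendsto f atTop (nhds c)) :
    ∀ s ∈ Set.Ioi s₀, f s = c := by
  intro s hs
  have hev : f =ᶠ[atTop] fun _ => f s := by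
    filter_upwards [Ioi_mem_atTop s₀] with y hy using const_of_deriv hf y hy s hs
  have h1 : Tendsto (fun _ : ℝ => f s) atTop (nhds c) := h0.congr' hev
  exact (tendsto_nhds_unique h1 tendsto_const_nhds).symm

lemma key_alg (a s X Y Z σ v A M d1 d2 : ℝ)
    (hd1 : d1 = -(2*a)*Z) (hd2 : d2*(1+s^2) = 2*a*(X-Y))
    (hRe : σ = X+Y-2*(a*s+v)*Z) (hve : 2*a*v = σ)
    (hW : 4*a^2*(M + s*σ + 2*a*((1+s^2)*Z)) - σ^2 = 4*a^2*A)
    (hM : X*Y = M*Z^2) :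
    (1+s^2)^2*d2^2 + 4*(1+s^2)*d1^3 - 8*s*σ*d1^2 + 4*σ^2*(d1-a^2)
      + 8*a^2*s*σ*d1 + 4*(A-a^2*s^2)*d1^2 = 0 := by
  have h1 : (1+s^2)^2*d2^2 = (2*a*(X-Y))^2 := by rw [← hd2]; ring
  rw [h1]; subst hd1
  linear_combination (-4*Z^2) * hW + (-16*a^2) * hM
    + (-4*a*(a*(X+Y) + (σ*Z + a*σ + 2*a^2*s*Z))) * hRe
    + (4*Z*(a*(X+Y) + (σ*Z + a*σ + 2*a^2*s*Z))) * hve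

set_option maxHeartbeats 2000000 in
/-- The function `σ(s) = (1+s²)R(s)` for the Cauchy unitary ensemble on `(s,∞)`
satisfies the second order second degree ODE
`(1+s²)²(σ'')² + 4(1+s²)(σ')³ - 8sσ(σ')² + 4σ²(σ'-a²) + 8a²sσσ'
  + 4[N(N+2a)-a²s²](σ')² = 0`. -/
theorem stmt9 (N : ℕ) (hN : 0 < N) (a β₀ γ₀ s₀ : ℝ) (ha : 1 / 2 < a)
    (hβ : β₀ = Real.sqrt ((N : ℝ) * (N + 2 * a) * (2 * a - 1) / (2 * a + 1)))
    (hγ : γ₀ = Real.sqrt ((N : ℝ) * (N + 2 * a) * (2 * a + 1) / (2 * a - 1)))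
    (q p u v w R : ℝ → ℝ)
    (hu : ∀ s ∈ Set.Ioi s₀, HasDerivAt u (-(q s) ^ 2) s)
    (hv : ∀ s ∈ Set.Ioi s₀, HasDerivAt v (-(q s * p s)) s)
    (hw : ∀ s ∈ Set.Ioi s₀, HasDerivAt w (-(p s) ^ 2) s)
    (hq : ∀ s ∈ Set.Ioi s₀, HasDerivAt q
      ((-(a * s + v s) * q s + (β₀ - (2 * a - 1) * u s) * p s) / (1 + s ^ 2)) s)
    (hp : ∀ s ∈ Set.Ioi s₀, HasDerivAt p
      ((-(γ₀ + (2 * a + 1) * w s) * q s + (a * s + v s) * p s) / (1 + s ^ 2)) s)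
    (hR : ∀ s ∈ Set.Ioi s₀, (1 + s ^ 2) * R s =
      (γ₀ + (2 * a + 1) * w s) * (q s) ^ 2 + (β₀ - (2 * a - 1) * u s) * (p s) ^ 2 -
        2 * (a * s + v s) * (q s * p s))
    (hσ : ∀ s ∈ Set.Ioi s₀,
      HasDerivAt (fun t => (1 + t ^ 2) * R t) (-2 * a * (q s * p s)) s)
    (hq0 : Tendsto q atTop (nhds 0)) (hp0 : Tendsto p atTop (nhds 0))
    (hu0 : Tendsto u atTop (nhds 0)) (hv0 : Tendsto v atTop (nhds 0))
    (hw0 : Tendsto w atTop (nhds 0))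
    (hσ0 : Tendsto (fun s => (1 + s ^ 2) * R s) atTop (nhds 0)) :
    ∀ s ∈ Set.Ioi s₀,
      (1 + s ^ 2) ^ 2 * (deriv (deriv (fun t => (1 + t ^ 2) * R t)) s) ^ 2 +
        4 * (1 + s ^ 2) * (deriv (fun t => (1 + t ^ 2) * R t) s) ^ 3 -
        8 * s * ((1 + s ^ 2) * R s) * (deriv (fun t => (1 + t ^ 2) * R t) s) ^ 2 +
        4 * ((1 + s ^ 2) * R s) ^ 2 * (deriv (fun t => (1 + t ^ 2) * R t) s - a ^ 2) +
        8 * a ^ 2 * s * ((1 + s ^ 2) * R s) * deriv (fun t => (1 + t ^ 2) * R t) s +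
        4 * ((N : ℝ) * (N + 2 * a) - a ^ 2 * s ^ 2) *
          (deriv (fun t => (1 + t ^ 2) * R t) s) ^ 2 = 0 := by
  have ha0 : a ≠ 0 := by linarith
  have hapos : (0:ℝ) < a := by linarith
  have ha1 : (0:ℝ) < 2*a - 1 := by linarith
  have ha2 : (0:ℝ) < 2*a + 1 := by linarith
  have hApos : (0:ℝ) < (N:ℝ) * ((N:ℝ) + 2*a) := by
    have : (1:ℝ) ≤ (N:ℝ) := by exact_mod_cast hN
    nlinarith
  have hβpos : 0 < β₀ := by
    rw [hβ]; apply Real.sqrt_pos.mpr; positivity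
  have hγpos : 0 < γ₀ := by
    rw [hγ]; apply Real.sqrt_pos.mpr; positivity
  have hβγ : β₀ * γ₀ = (N:ℝ) * ((N:ℝ) + 2*a) := by
    rw [hβ, hγ, ← Real.sqrt_mul (by positivity)]
    rw [show (N : ℝ) * ((N:ℝ) + 2 * a) * (2 * a - 1) / (2 * a + 1) *
        ((N : ℝ) * ((N:ℝ) + 2 * a) * (2 * a + 1) / (2 * a - 1)) = ((N:ℝ) * ((N:ℝ) + 2*a))^2 by
      field_simp]
    exact Real.sqrt_sq hApos.le
  -- the first integral 2 a v = σ
  have hv2 : ∀ s ∈ Set.Ioi s₀, 2*a*v s = (1 + s^2) * R s := by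
    have hder : ∀ s ∈ Set.Ioi s₀,
        HasDerivAt (fun t => 2*a*v t - (1 + t^2) * R t) 0 s := by
      intro s hs
      have h1 := ((hv s hs).const_mul (2*a)).sub (hσ s hs)
      exact h1.congr_deriv (by ring)
    have hlim : Tendsto (fun t => 2*a*v t - (1 + t^2) * R t) atTop (nhds 0) := by
      have := (hv0.const_mul (2*a)).sub hσ0
      simpa using this
    intro s hs
    have := eq_limit hder hlim s hs
    linarith [this]
  -- the second first integral W
  have hWd : ∀ s ∈ Set.Ioi s₀, HasDerivAt (fun t =>
      4*a^2*((β₀ - (2*a-1)*u t)*(γ₀ + (2*a+1)*w t) + t*((1+t^2)*R t)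
        + 2*a*((1+t^2)*(q t * p t))) - ((1+t^2)*R t)^2) 0 s := by
    intro s hs
    have h1s : (1:ℝ) + s^2 ≠ 0 := by positivity
    have hB : HasDerivAt (fun t => β₀ - (2*a-1)*u t) (0 - (2*a-1) * (-(q s)^2)) s :=
      (hasDerivAt_const s β₀).sub ((hu s hs).const_mul (2*a-1))
    have hG : HasDerivAt (fun t => γ₀ + (2*a+1)*w t) (0 + (2*a+1) * (-(p s)^2)) s :=
      (hasDerivAt_const s γ₀).add ((hw s hs).const_mul (2*a+1))
    have ht2 : HasDerivAt (fun t : ℝ => 1 + t^2) (0 + ↑(2:ℕ)*s^(2-1)) s :=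
      (hasDerivAt_const s 1).add (hasDerivAt_pow 2 s)
    have hbig := (((hB.mul hG).add ((hasDerivAt_id s).mul (hσ s hs))).add
        ((ht2.mul ((hq s hs).mul (hp s hs))).const_mul (2*a))).const_mul (4*a^2)
      |>.sub ((hσ s hs).pow 2)
    refine hbig.congr_deriv (Eq.symm ?_)
    have hRs := hR s hs
    have hvs := hv2 s hs
    have hclear : ∀ A B : ℝ, (1+s^2) * (A/(1+s^2)*p s + q s*(B/(1+s^2))) = A*p s + q s*B := by
      intro A B; field_simp
    rw [hclear]
    simp only [id_eq, Pi.mul_apply]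
    linear_combination (-4*a^2) * hRs + (4*a*(q s * p s)) * hvs
  -- W is constant, equal to C
  obtain ⟨C, hCdef⟩ : ∃ x : ℝ, x = 4*a^2*((β₀ - (2*a-1)*u (s₀+1))*(γ₀ + (2*a+1)*w (s₀+1))
      + (s₀+1)*((1+(s₀+1)^2)*R (s₀+1))
      + 2*a*((1+(s₀+1)^2)*(q (s₀+1) * p (s₀+1)))) - ((1+(s₀+1)^2)*R (s₀+1))^2 := ⟨_, rfl⟩
  have hWC : ∀ s ∈ Set.Ioi s₀, 4*a^2*((β₀ - (2*a-1)*u s)*(γ₀ + (2*a+1)*w s)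
      + s*((1+s^2)*R s) + 2*a*((1+s^2)*(q s * p s))) - ((1+s^2)*R s)^2 = C := by
    intro s hs
    rw [hCdef]
    exact const_of_deriv hWd s hs (s₀+1) (by simp [Set.mem_Ioi])
  have hWtend : Tendsto (fun t => 4*a^2*((β₀ - (2*a-1)*u t)*(γ₀ + (2*a+1)*w t)
      + t*((1+t^2)*R t) + 2*a*((1+t^2)*(q t * p t))) - ((1+t^2)*R t)^2)
      atTop (nhds C) := by
    refine tendsto_const_nhds.congr' ?_
    filter_upwards [Ioi_mem_atTop s₀] with y hy using (hWC y hy).symm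
  -- basic limits
  have hZt : Tendsto (fun t => q t * p t) atTop (nhds 0) := by
    simpa using hq0.mul hp0
  have hBt : Tendsto (fun t => β₀ - (2*a-1)*u t) atTop (nhds β₀) := by
    simpa using (tendsto_const_nhds (x := β₀)).sub (hu0.const_mul (2*a-1))
  have hGt : Tendsto (fun t => γ₀ + (2*a+1)*w t) atTop (nhds γ₀) := by
    simpa using (tendsto_const_nhds (x := γ₀)).add (hw0.const_mul (2*a+1))
  have hBGt : Tendsto (fun t => (β₀ - (2*a-1)*u t) * (γ₀ + (2*a+1)*w t)) atTop
      (nhds (β₀*γ₀)) := hBt.mul hGt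
  obtain ⟨L, hLdef⟩ : ∃ x : ℝ, x = (C - 4*a^2*(β₀*γ₀))/(4*a^2) := ⟨_, rfl⟩
  -- the function F := sσ + 2a(1+s²)qp tends to L
  have hFt : Tendsto (fun t => t*((1+t^2)*R t) + 2*a*((1+t^2)*(q t * p t)))
      atTop (nhds L) := by
    have h4 : Tendsto (fun t => ((4*a^2*((β₀ - (2*a-1)*u t)*(γ₀ + (2*a+1)*w t)
        + t*((1+t^2)*R t) + 2*a*((1+t^2)*(q t * p t))) - ((1+t^2)*R t)^2)
        - 4*a^2*((β₀ - (2*a-1)*u t) * (γ₀ + (2*a+1)*w t)) + ((1+t^2)*R t)^2))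
        atTop (nhds (C - 4*a^2*(β₀*γ₀) + 0)) :=
      (hWtend.sub (hBGt.const_mul (4*a^2))).add (by simpa using hσ0.pow 2)
    have h5 := h4.div_const (4*a^2)
    have h6 : Tendsto (fun t => t*((1+t^2)*R t) + 2*a*((1+t^2)*(q t * p t)))
        atTop (nhds ((C - 4*a^2*(β₀*γ₀) + 0)/(4*a^2))) := by
      refine h5.congr fun t => ?_
      field_simp
      ring
    rw [add_zero, ← hLdef] at h6
    exact h6
  -- F in terms of Φ
  have hFΦ : ∀ t ∈ Set.Ioi s₀, t*((1+t^2)*R t) + 2*a*((1+t^2)*(q t * p t))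
      = t*((γ₀+(2*a+1)*w t)*(q t)^2 + (β₀-(2*a-1)*u t)*(p t)^2)
        + (2*a - 2*t*(v t))*(q t * p t) := by
    intro t ht
    linear_combination t * (hR t ht)
  obtain ⟨m, hmdef⟩ : ∃ x : ℝ, x = min β₀ γ₀ / 2 := ⟨_, rfl⟩
  have hm : 0 < m := by rw [hmdef]; positivity
  obtain ⟨M, hMdef⟩ : ∃ x : ℝ, x = max β₀ γ₀ + 1 := ⟨_, rfl⟩
  have hMpos : 0 < M := by
    rw [hMdef]
    have := le_max_left β₀ γ₀
    linarith
  obtain ⟨K, hKdef⟩ : ∃ x : ℝ, x = (4/3)*(|L| + 1 + 2*a) := ⟨_, rfl⟩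
  have hKpos : 0 < K := by
    rw [hKdef]
    have := abs_nonneg L
    linarith
  -- main eventual bounds
  have evMain : ∀ᶠ t in atTop,
      (0 ≤ t*((γ₀+(2*a+1)*w t)*(q t)^2 + (β₀-(2*a-1)*u t)*(p t)^2)
      ∧ t*((γ₀+(2*a+1)*w t)*(q t)^2 + (β₀-(2*a-1)*u t)*(p t)^2) ≤ K
      ∧ t*((γ₀+(2*a+1)*w t)*(q t)^2 + (β₀-(2*a-1)*u t)*(p t)^2)
          ≤ M*(t*((q t)^2+(p t)^2)))
      ∧ |t*((γ₀+(2*a+1)*w t)*(q t)^2 + (β₀-(2*a-1)*u t)*(p t)^2)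
          - (t*((1+t^2)*R t) + 2*a*((1+t^2)*(q t * p t)))|
        ≤ 2*a*|q t * p t| + (K/m)*|v t| := by
    have hminpos : 0 < min β₀ γ₀ := lt_min hβpos hγpos
    have hmβ : m < β₀ := by
      have := min_le_left β₀ γ₀; rw [hmdef]; linarith
    have hmγ : m < γ₀ := by
      have := min_le_right β₀ γ₀; rw [hmdef]; linarith
    have hβM : β₀ < M := by
      have := le_max_left β₀ γ₀; rw [hMdef]; linarith
    have hγM : γ₀ < M := by
      have := le_max_right β₀ γ₀; rw [hMdef]; linarith
    have evB1 := hBt.eventually (eventually_ge_nhds hmβ)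
    have evB2 := hBt.eventually (eventually_le_nhds hβM)
    have evG1 := hGt.eventually (eventually_ge_nhds hmγ)
    have evG2 := hGt.eventually (eventually_le_nhds hγM)
    have hvabs : Tendsto (fun t => |v t|) atTop (nhds 0) := by simpa using hv0.abs
    have hZabs : Tendsto (fun t => |q t * p t|) atTop (nhds 0) := by simpa using hZt.abs
    have evv := hvabs.eventually (eventually_le_nhds (show (0:ℝ) < m/4 by positivity))
    have evZ := hZabs.eventually (eventually_le_nhds (show (0:ℝ) < 1 by norm_num))
    have hFL : Tendsto (fun t => |(t*((1+t^2)*R t) + 2*a*((1+t^2)*(q t * p t))) - L|)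
        atTop (nhds 0) := by
      have := (hFt.sub (tendsto_const_nhds (x := L))).abs
      simpa using this
    have evF := hFL.eventually (eventually_le_nhds (show (0:ℝ) < 1 by norm_num))
    filter_upwards [evB1, evB2, evG1, evG2, evv, evZ, evF,
      eventually_gt_atTop (max s₀ 1)] with t hB1 hB2 hG1 hG2 hv4 hZ1 hF1 htl
    have ht1 : (1:ℝ) < t := lt_of_le_of_lt (le_max_right s₀ 1) htl
    have ht0 : (0:ℝ) < t := lt_trans one_pos ht1
    have hts0 : t ∈ Set.Ioi s₀ := lt_of_le_of_lt (le_max_left s₀ 1) htl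
    -- abbreviations
    have key1 : m*(t*((q t)^2+(p t)^2))
        ≤ t*((γ₀+(2*a+1)*w t)*(q t)^2 + (β₀-(2*a-1)*u t)*(p t)^2) := by
      have e1 : m*(q t)^2 ≤ (γ₀+(2*a+1)*w t)*(q t)^2 :=
        mul_le_mul_of_nonneg_right hG1 (sq_nonneg _)
      have e2 : m*(p t)^2 ≤ (β₀-(2*a-1)*u t)*(p t)^2 :=
        mul_le_mul_of_nonneg_right hB1 (sq_nonneg _)
      have e3 := mul_le_mul_of_nonneg_left (add_le_add e1 e2) ht0.le
      calc m*(t*((q t)^2+(p t)^2)) = t*(m*(q t)^2 + m*(p t)^2) := by ring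
        _ ≤ t*((γ₀+(2*a+1)*w t)*(q t)^2 + (β₀-(2*a-1)*u t)*(p t)^2) := e3
    have key2 : t*((γ₀+(2*a+1)*w t)*(q t)^2 + (β₀-(2*a-1)*u t)*(p t)^2)
        ≤ M*(t*((q t)^2+(p t)^2)) := by
      have e1 : (γ₀+(2*a+1)*w t)*(q t)^2 ≤ M*(q t)^2 :=
        mul_le_mul_of_nonneg_right hG2 (sq_nonneg _)
      have e2 : (β₀-(2*a-1)*u t)*(p t)^2 ≤ M*(p t)^2 :=
        mul_le_mul_of_nonneg_right hB2 (sq_nonneg _)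
      have e3 := mul_le_mul_of_nonneg_left (add_le_add e1 e2) ht0.le
      calc t*((γ₀+(2*a+1)*w t)*(q t)^2 + (β₀-(2*a-1)*u t)*(p t)^2)
          ≤ t*(M*(q t)^2 + M*(p t)^2) := e3
        _ = M*(t*((q t)^2+(p t)^2)) := by ring
    have habs2Z : 2*|q t * p t| ≤ (q t)^2 + (p t)^2 := by
      rw [abs_mul]
      linarith [sq_nonneg (|q t| - |p t|), sq_abs (q t), sq_abs (p t)]
    have hFform := hFΦ t hts0
    -- bound on the cross term
    have b1 : |(2*a - 2*t*(v t))*(q t * p t)|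
        ≤ 2*a*(|q t * p t|) + 2*t*(|v t|)*(|q t * p t|) := by
      rw [abs_mul]
      have h1 : |2*a - 2*t*(v t)| ≤ 2*a + 2*t*|v t| := by
        have := abs_sub (2*a) (2*t*(v t))
        have h2 : |2*a| = 2*a := abs_of_pos (by linarith)
        have h3 : |2*t*(v t)| = 2*t*(|v t|) := by
          rw [abs_mul, abs_of_pos (by linarith : (0:ℝ) < 2*t)]
        linarith [this]
      calc |2*a - 2*t*(v t)| * |q t * p t|
          ≤ (2*a + 2*t*(|v t|)) * |q t * p t| :=
            mul_le_mul_of_nonneg_right h1 (abs_nonneg (q t * p t))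
        _ = 2*a*(|q t * p t|) + 2*t*(|v t|)*(|q t * p t|) := by ring
    have b2 : 2*t*(|v t|)*(|q t * p t|)
        ≤ (t*((γ₀+(2*a+1)*w t)*(q t)^2 + (β₀-(2*a-1)*u t)*(p t)^2))/4 := by
      have c1 : t*(|v t|)*(2*(|q t * p t|)) ≤ t*(|v t|)*((q t)^2+(p t)^2) :=
        mul_le_mul_of_nonneg_left habs2Z (by positivity)
      have c2 : t*((q t)^2+(p t)^2)*|v t| ≤ t*((q t)^2+(p t)^2)*(m/4) :=
        mul_le_mul_of_nonneg_left hv4 (by positivity)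
      linarith [key1, c1, c2]
    have hFabs := abs_le.mp hF1
    have hLabs := le_abs_self L
    have hLabs' := neg_abs_le L
    have hcross := neg_abs_le ((2*a - 2*t*(v t))*(q t * p t))
    have hZcoef : 2*a*(|q t * p t|) ≤ 2*a := by
      have h := mul_le_mul_of_nonneg_left hZ1 (by linarith : (0:ℝ) ≤ 2*a)
      linarith [h]
    have hΦK : t*((γ₀+(2*a+1)*w t)*(q t)^2 + (β₀-(2*a-1)*u t)*(p t)^2) ≤ K := by
      rw [hKdef]
      linarith [hFform, b1, b2, hcross, hFabs.2, hLabs, hZcoef]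
    refine ⟨⟨?_, hΦK, key2⟩, ?_⟩
    · have h0 : 0 ≤ m*(t*((q t)^2+(p t)^2)) := by positivity
      linarith [key1, h0]
    · have hdiff : t*((γ₀+(2*a+1)*w t)*(q t)^2 + (β₀-(2*a-1)*u t)*(p t)^2)
          - (t*((1+t^2)*R t) + 2*a*((1+t^2)*(q t * p t)))
          = -((2*a - 2*t*(v t))*(q t * p t)) := by linarith [hFform]
      rw [hdiff, abs_neg]
      have b2' : 2*t*(|v t|)*(|q t * p t|) ≤ (K/m)*(|v t|) := by
        have c1 : t*(|v t|)*(2*(|q t * p t|)) ≤ t*(|v t|)*((q t)^2+(p t)^2) :=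
          mul_le_mul_of_nonneg_left habs2Z (by positivity)
        have c3 : m*(t*((q t)^2+(p t)^2)) ≤ K := le_trans key1 hΦK
        have c5 : t*((q t)^2+(p t)^2) ≤ K/m := by
          rw [le_div_iff₀ hm]; linarith [c3]
        have c6 : (|v t|)*(t*((q t)^2+(p t)^2)) ≤ (|v t|)*(K/m) :=
          mul_le_mul_of_nonneg_left c5 (abs_nonneg _)
        linarith [c1, c6]
      linarith [b1, b2']
    -- Φ tends to L
  have hΦt : Tendsto (fun t => t*((γ₀+(2*a+1)*w t)*(q t)^2
      + (β₀-(2*a-1)*u t)*(p t)^2)) atTop (nhds L) := by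
    have hg : Tendsto (fun t => 2*a*(|q t * p t|) + (K/m)*(|v t|)) atTop (nhds 0) := by
      have h1 : Tendsto (fun t => |q t * p t|) atTop (nhds 0) := by simpa using hZt.abs
      have h2 : Tendsto (fun t => |v t|) atTop (nhds 0) := by simpa using hv0.abs
      simpa using (h1.const_mul (2*a)).add (h2.const_mul (K/m))
    have hd : Tendsto (fun t => t*((γ₀+(2*a+1)*w t)*(q t)^2 + (β₀-(2*a-1)*u t)*(p t)^2)
        - (t*((1+t^2)*R t) + 2*a*((1+t^2)*(q t * p t)))) atTop (nhds 0) := by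
      refine squeeze_zero_norm' ?_ hg
      filter_upwards [evMain] with t ht
      simpa [Real.norm_eq_abs] using ht.2
    have hsum := hd.add hFt
    rw [zero_add] at hsum
    refine hsum.congr fun t => by ring
  have hΦ0ev : ∀ᶠ t in atTop, 0 ≤ t*((γ₀+(2*a+1)*w t)*(q t)^2
      + (β₀-(2*a-1)*u t)*(p t)^2) := by
    filter_upwards [evMain] with t ht using ht.1.1
  have hL0 : 0 ≤ L := ge_of_tendsto hΦt hΦ0ev
  have hL1 : L ≤ 0 := by
    by_contra hcon
    push_neg at hcon
    have evΦ2 := hΦt.eventually (eventually_ge_nhds (by linarith : L/2 < L))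
    have evQP : ∀ᶠ t in atTop, (L/(2*M))/t ≤ (q t)^2 + (p t)^2 := by
      filter_upwards [evΦ2, evMain, eventually_gt_atTop (max s₀ 1)] with t h1 h2 htl
      have ht0 : (0:ℝ) < t := lt_trans one_pos (lt_of_le_of_lt (le_max_right s₀ 1) htl)
      rw [div_div, div_le_iff₀ (by positivity)]
      linarith [h2.1.2.2, h1]
    obtain ⟨s₂, hs₂⟩ := eventually_atTop.mp (evQP.and (eventually_gt_atTop (max s₀ 1)))
    obtain ⟨c, hcdef⟩ : ∃ x:ℝ, x = L/(2*M) := ⟨_, rfl⟩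
    have hc : 0 < c := by rw [hcdef]; positivity
    obtain ⟨s₃, hs₃def⟩ : ∃ x:ℝ, x = max s₂ (max s₀ 1 + 1) := ⟨_, rfl⟩
    have hs₃s₀ : s₀ < s₃ := by
      rw [hs₃def]
      have h1 := le_max_left s₀ 1
      have h2 := le_max_right s₂ (max s₀ 1 + 1)
      linarith
    have hs₃0 : 0 < s₃ := by
      rw [hs₃def]
      have h1 := le_max_right s₀ 1
      have h2 := le_max_right s₂ (max s₀ 1 + 1)
      linarith
    have hprop : ∀ t, s₃ ≤ t → c/t ≤ (q t)^2+(p t)^2 := by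
      intro t ht
      have h2 : s₂ ≤ t := le_trans (by rw [hs₃def]; exact le_max_left _ _) ht
      rw [hcdef]
      exact (hs₂ t h2).1
    have hanti : AntitoneOn (fun t => u t + w t + c*Real.log t) (Set.Ici s₃) := by
      refine antitoneOn_of_deriv_nonpos (convex_Ici s₃) ?_ ?_ ?_
      · intro t ht
        have hts₀ : t ∈ Set.Ioi s₀ := lt_of_lt_of_le hs₃s₀ ht
        have ht0 : t ≠ 0 := ne_of_gt (lt_of_lt_of_le hs₃0 ht)
        exact (((hu t hts₀).continuousAt.add (hw t hts₀).continuousAt).add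
          (continuousAt_const.mul (Real.continuousAt_log ht0))).continuousWithinAt
      · rw [interior_Ici]
        intro t ht
        have hts₀ : t ∈ Set.Ioi s₀ := lt_trans hs₃s₀ ht
        have ht0 : t ≠ 0 := ne_of_gt (lt_trans hs₃0 ht)
        exact (((hu t hts₀).add (hw t hts₀)).add
          ((Real.hasDerivAt_log ht0).const_mul c)).differentiableAt.differentiableWithinAt
      · rw [interior_Ici]
        intro t ht
        have hts₀ : t ∈ Set.Ioi s₀ := lt_trans hs₃s₀ ht
        have htpos : (0:ℝ) < t := lt_trans hs₃0 ht
        have hder := ((hu t hts₀).add (hw t hts₀)).add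
          ((Real.hasDerivAt_log (ne_of_gt htpos)).const_mul c)
        rw [(show HasDerivAt (fun x => u x + w x + c * Real.log x) _ t from hder).deriv]
        have hqp := hprop t (le_of_lt ht)
        have e : c * t⁻¹ = c/t := by rw [div_eq_mul_inv]
        linarith [hqp, e]
    have huw : Tendsto (fun t => u t + w t) atTop (nhds 0) := by simpa using hu0.add hw0
    have evuw := huw.eventually (eventually_ge_nhds (by norm_num : (-1:ℝ) < 0))
    have evlog := Real.tendsto_log_atTop.eventually_ge_atTop
      ((u s₃ + w s₃ + c*Real.log s₃ + 2)/c)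
    obtain ⟨t, ⟨h1, h2⟩, h3⟩ := ((evuw.and evlog).and (eventually_ge_atTop s₃)).exists
    have happ := hanti Set.self_mem_Ici (Set.mem_Ici.mpr h3) h3
    have hlogc : u s₃ + w s₃ + c*Real.log s₃ + 2 ≤ c * Real.log t := by
      rw [div_le_iff₀ hc] at h2
      linarith [h2]
    simp only at happ
    linarith [happ, h1, hlogc]
  have hLz : L = 0 := le_antisymm hL1 hL0
  have hCval : C = 4*a^2*((N:ℝ)*((N:ℝ)+2*a)) := by
    have h1 : C - 4*a^2*(β₀*γ₀) = 4*a^2 * L := by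
      rw [hLdef]; field_simp
    rw [hLz, mul_zero] at h1
    rw [← hβγ]; linarith [h1]
  -- final algebraic step
  intro s hs
  have h1s : (1:ℝ) + s^2 ≠ 0 := by positivity
  have hd1 : deriv (fun t => (1 + t ^ 2) * R t) s = -(2*a)*(q s * p s) := by
    rw [(hσ s hs).deriv]; ring
  have hev : deriv (fun t => (1 + t ^ 2) * R t) =ᶠ[nhds s]
      fun t => -2 * a * (q t * p t) := by
    filter_upwards [isOpen_Ioi.mem_nhds hs] with t ht using (hσ t ht).deriv
  have hdd : deriv (deriv (fun t => (1 + t ^ 2) * R t)) s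
      = deriv (fun t => -2 * a * (q t * p t)) s := hev.deriv_eq
  have h2 := ((hq s hs).mul (hp s hs)).const_mul (-2 * a)
  have hd2 : deriv (deriv (fun t => (1 + t ^ 2) * R t)) s * (1+s^2)
      = 2*a*((γ₀+(2*a+1)*w s)*(q s)^2 - (β₀-(2*a-1)*u s)*(p s)^2) := by
    rw [hdd, (show HasDerivAt (fun t => -2 * a * (q t * p t)) _ s from h2).deriv]
    field_simp
    ring
  have hW4 : 4*a^2*((β₀-(2*a-1)*u s)*(γ₀+(2*a+1)*w s) + s*((1+s^2)*R s)
      + 2*a*((1+s^2)*(q s * p s))) - ((1+s^2)*R s)^2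
      = 4*a^2*((N:ℝ)*((N:ℝ)+2*a)) := by
    rw [← hCval]; exact hWC s hs
  have hfin := key_alg a s ((γ₀+(2*a+1)*w s)*(q s)^2) ((β₀-(2*a-1)*u s)*(p s)^2)
    (q s * p s) ((1+s^2)*R s) (v s) ((N:ℝ)*((N:ℝ)+2*a))
    ((β₀-(2*a-1)*u s)*(γ₀+(2*a+1)*w s))
    (deriv (fun t => (1 + t ^ 2) * R t) s)
    (deriv (deriv (fun t => (1 + t ^ 2) * R t)) s)
    hd1 hd2 (hR s hs) (hv2 s hs) hW4 (by ring)
  linarith [hfin]
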